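/- MISELBO is a lower bound on the log marginal likelihood: for a positive joint density p(x, z) with marginal p(x) = ∫ p(x,z) dz, and probability densities q_1, …, q_A on the latent space, (1/A)∑_{a=1}^{A} E_{z ∼ q_a}[log(p(x,z)/((1/A)∑_{a'} q_{a'}(z)))] ≤ log p(x). -/

import Mathlib

open MeasureTheory Finset

/-- MISELBO is a lower bound on the log marginal likelihood. -/
theorem miselbo_le_log_marginal
    {Z : Type*} [MeasurableSpace Z] (μ : Measure Z) [SigmaFinite μ]
    (A : ℕ) (hA : 0 < A)
    (p : Z → ℝ) (hp : ∀ z, 0 < p z) (hpInt : Integrable p μ)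
    (q : Fin A → Z → ℝ)
    (hq0 : ∀ a z, 0 < q a z) (hq1 : ∀ a, ∫ z, q a z ∂μ = 1)
    (hInt : ∀ a, Integrable
      (fun z => q a z * Real.log (p z / ((1 / (A : ℝ)) * ∑ a', q a' z))) μ) :
    (1 / (A : ℝ)) * ∑ a,
        ∫ z, q a z * Real.log (p z / ((1 / (A : ℝ)) * ∑ a', q a' z)) ∂μ
      ≤ Real.log (∫ z, p z ∂μ) := by
  have hA' : (0:ℝ) < (A:ℝ) := by exact_mod_cast hA
  set Q : Z → ℝ := fun z => (1 / (A : ℝ)) * ∑ a', q a' z with hQdef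
  have hQpos : ∀ z, 0 < Q z := by
    intro z
    have : 0 < ∑ a', q a' z :=
      Finset.sum_pos (fun a _ => hq0 a z) (Finset.univ_nonempty_iff.mpr ⟨⟨0, hA⟩⟩)
    positivity
  -- each q a is integrable
  have hqInt : ∀ a, Integrable (q a) μ := by
    intro a
    by_contra h
    have := integral_undef h
    rw [hq1 a] at this
    norm_num at this
  have hQInt : Integrable Q μ := by
    apply Integrable.const_mul
    exact integrable_finset_sum _ (fun a _ => hqInt a)
  have hQint1 : ∫ z, Q z ∂μ = 1 := by
    rw [hQdef]
    simp only
    rw [integral_const_mul, integral_finset_sum _ (fun a _ => hqInt a)]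
    simp [hq1]
    field_simp
  -- g is integrable
  have hgEq : ∀ z, Q z * Real.log (p z / Q z)
      = ∑ a, (1 / (A:ℝ)) * (q a z * Real.log (p z / Q z)) := by
    intro z
    rw [← Finset.mul_sum, ← Finset.sum_mul]
    ring
  have hgInt : Integrable (fun z => Q z * Real.log (p z / Q z)) μ := by
    have : Integrable (fun z => ∑ a, (1 / (A:ℝ)) * (q a z * Real.log (p z / Q z))) μ :=
      integrable_finset_sum _ (fun a _ => (hInt a).const_mul _)
    exact this.congr (Filter.Eventually.of_forall fun z => (hgEq z).symm)
  -- LHS = ∫ g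
  have hLHS : (1 / (A : ℝ)) * ∑ a,
      ∫ z, q a z * Real.log (p z / Q z) ∂μ
      = ∫ z, Q z * Real.log (p z / Q z) ∂μ := by
    rw [Finset.mul_sum]
    rw [show ∀ (f : Fin A → ℝ), (∑ a, (1 / (A:ℝ)) * f a) = ∑ a, (1 / (A:ℝ)) * f a from fun _ => rfl]
    have : ∑ a, (1 / (A:ℝ)) * ∫ z, q a z * Real.log (p z / Q z) ∂μ
        = ∑ a, ∫ z, (1 / (A:ℝ)) * (q a z * Real.log (p z / Q z)) ∂μ := by
      congr 1; ext a; rw [integral_const_mul]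
    rw [this, ← integral_finset_sum _ (fun a _ => (hInt a).const_mul _)]
    congr 1; ext z; exact (hgEq z).symm
  -- S > 0
  set S : ℝ := ∫ z, p z ∂μ with hSdef
  have hμne : μ ≠ 0 := by
    intro h
    have := hq1 ⟨0, hA⟩
    rw [h] at this
    simp at this
  have hS : 0 < S := by
    rw [hSdef]
    rw [integral_pos_iff_support_of_nonneg (fun z => (hp z).le) hpInt]
    have : Function.support p = Set.univ := by
      ext z; simp [Function.support, (hp z).ne']
    rw [this]
    simpa [Measure.measure_univ_pos] using hμne
  -- pointwise bound
  have hpt : ∀ z, Q z * Real.log (p z / Q z)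
      ≤ Q z * Real.log S + (p z / S - Q z) := by
    intro z
    have hQz := hQpos z
    have hpz := hp z
    have hlog : Real.log (p z / Q z)
        = Real.log (p z / (S * Q z)) + Real.log S := by
      rw [← Real.log_mul (by positivity) hS.ne']
      congr 1
      field_simp
    rw [hlog, mul_add, add_comm]
    gcongr
    have h1 : Real.log (p z / (S * Q z)) ≤ p z / (S * Q z) - 1 :=
      Real.log_le_sub_one_of_pos (by positivity)
    calc Q z * Real.log (p z / (S * Q z)) ≤ Q z * (p z / (S * Q z) - 1) := by
          exact mul_le_mul_of_nonneg_left h1 hQz.le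
      _ = p z / S - Q z := by field_simp
  rw [hLHS]
  have hrhsInt : Integrable (fun z => Q z * Real.log S + (p z / S - Q z)) μ := by
    exact ((hQInt.mul_const _).add ((hpInt.div_const _).sub hQInt))
  calc ∫ z, Q z * Real.log (p z / Q z) ∂μ
      ≤ ∫ z, (Q z * Real.log S + (p z / S - Q z)) ∂μ :=
        integral_mono hgInt hrhsInt hpt
    _ = Real.log S := by
        have h1 : ∫ z, (Q z * Real.log S + (p z / S - Q z)) ∂μ
            = (∫ z, Q z * Real.log S ∂μ) + ∫ z, (p z / S - Q z) ∂μ :=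
          integral_add (hQInt.mul_const _) ((hpInt.div_const _).sub hQInt)
        have h2 : ∫ z, (p z / S - Q z) ∂μ = (∫ z, p z / S ∂μ) - ∫ z, Q z ∂μ :=
          integral_sub (hpInt.div_const _) hQInt
        rw [h1, h2, integral_mul_const, integral_div, hQint1, ← hSdef]
        field_simp
        ring
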